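/- Let π ∈ ℝⁿ, δ > 0, and take the cost c(u,w) = ‖u − w‖₂. Then inf over probability measures P on ℝⁿ with C(P,Q) ≤ δ of E_P[⟪π, R⟫] equals (1/N) Σ_{i=1}^N ⟪π, Rᵢ⟫ − δ‖π‖₂. (Every P with C(P,Q) ≤ δ has finite first moment, so the expectation is well-defined and finite.) -/

import Mathlib

open MeasureTheory
open scoped ENNReal RealInnerProductSpace BigOperators

/-- The optimal transport cost between two measures on `ℝⁿ` with cost function `c`. -/
noncomputable def transportCost {n : ℕ}
    (c : EuclideanSpace ℝ (Fin n) → EuclideanSpace ℝ (Fin n) → ℝ≥0∞)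
    (μ ν : Measure (EuclideanSpace ℝ (Fin n))) : ℝ≥0∞ :=
  ⨅ (γ : Measure (EuclideanSpace ℝ (Fin n) × EuclideanSpace ℝ (Fin n)))
    (_ : γ.map Prod.fst = μ) (_ : γ.map Prod.snd = ν),
    ∫⁻ p, c p.1 p.2 ∂γ

/-- The empirical measure `Q = (1/N) ∑ᵢ δ_{Rᵢ}`. -/
noncomputable def empirical {n N : ℕ} (R : Fin N → EuclideanSpace ℝ (Fin n)) :
    Measure (EuclideanSpace ℝ (Fin n)) :=
  (N : ℝ≥0∞)⁻¹ • ∑ i, Measure.dirac (R i)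

lemma empirical_prob {n N : ℕ} (hN : 0 < N) (R : Fin N → EuclideanSpace ℝ (Fin n)) :
    IsProbabilityMeasure (empirical R) := by
  constructor
  simp only [empirical, Measure.smul_apply, Measure.coe_finset_sum, Finset.sum_apply,
    Measure.dirac_apply_of_mem (Set.mem_univ _), Finset.sum_const, Finset.card_univ,
    Fintype.card_fin, nsmul_eq_mul, mul_one, smul_eq_mul]
  exact ENNReal.inv_mul_cancel (by exact_mod_cast hN.ne') (ENNReal.natCast_ne_top N)

lemma integrable_dirac' {α E : Type*} [MeasurableSpace α] [MeasurableSingletonClass α]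
    [NormedAddCommGroup E] (f : α → E) (a : α)
    (hf : AEStronglyMeasurable f (Measure.dirac a)) : Integrable f (Measure.dirac a) := by
  refine ⟨hf, ?_⟩
  simp [HasFiniteIntegral, lintegral_dirac]

lemma integral_empirical {n N : ℕ} (R : Fin N → EuclideanSpace ℝ (Fin n))
    (f : EuclideanSpace ℝ (Fin n) → ℝ) (hf : Continuous f) :
    ∫ x, f x ∂(empirical R) = (N : ℝ)⁻¹ * ∑ i, f (R i) := by
  have hint : ∀ i ∈ Finset.univ, Integrable f (Measure.dirac (R i)) := fun i _ =>
    integrable_dirac' f (R i) hf.aestronglyMeasurable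
  rw [empirical, integral_smul_measure, integral_finset_sum_measure hint]
  simp [integral_dirac, ENNReal.toReal_inv, smul_eq_mul]

lemma lintegral_empirical {n N : ℕ} (R : Fin N → EuclideanSpace ℝ (Fin n))
    (f : EuclideanSpace ℝ (Fin n) → ℝ≥0∞) :
    ∫⁻ x, f x ∂(empirical R) = (N : ℝ≥0∞)⁻¹ * ∑ i, f (R i) := by
  rw [empirical, lintegral_smul_measure, lintegral_finset_sum_measure]
  simp [lintegral_dirac]

/-- Feasible-region duality for `κ = 1` (from the proof of Proposition 4.1):
`inf_{P : C(P,Q) ≤ δ} E_P[⟪π, R⟫] = (1/N) ∑ᵢ ⟪π, Rᵢ⟫ − δ‖π‖₂`,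
with the cost `c(u,w) = ‖u − w‖₂`. -/
theorem worst_case_mean_k1 (n N : ℕ) (hN : 0 < N)
    (R : Fin N → EuclideanSpace ℝ (Fin n))
    (π : EuclideanSpace ℝ (Fin n)) (δ : ℝ) (hδ : 0 < δ) :
    (⨅ (P : Measure (EuclideanSpace ℝ (Fin n)))
        (_ : IsProbabilityMeasure P)
        (_ : transportCost (fun u w => ENNReal.ofReal ‖u - w‖) P (empirical R)
          ≤ ENNReal.ofReal δ),
        ((∫ x, ⟪π, x⟫ ∂P : ℝ) : EReal)) =
    (((N : ℝ)⁻¹ * ∑ i : Fin N, ⟪π, R i⟫ - δ * ‖π‖ : ℝ) : EReal) := by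
  classical
  haveI hQ : IsProbabilityMeasure (empirical R) := empirical_prob hN R
  set m : ℝ := (N : ℝ)⁻¹ * ∑ i : Fin N, ⟪π, R i⟫ with hm
  have hinner_cont : Continuous fun x : EuclideanSpace ℝ (Fin n) => ⟪π, x⟫ :=
    continuous_const.inner continuous_id
  -- Lower bound
  have lower : ∀ P : Measure (EuclideanSpace ℝ (Fin n)), IsProbabilityMeasure P →
      transportCost (fun u w => ENNReal.ofReal ‖u - w‖) P (empirical R) ≤ ENNReal.ofReal δ →
      m - δ * ‖π‖ ≤ ∫ x, ⟪π, x⟫ ∂P := by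
    intro P hP hle
    refine le_of_forall_pos_le_add fun ε hε => ?_
    -- extract a near-optimal coupling
    have hlt : transportCost (fun u w => ENNReal.ofReal ‖u - w‖) P (empirical R)
        < ENNReal.ofReal (δ + ε / (‖π‖ + 1)) := by
      refine lt_of_le_of_lt hle ?_
      rw [ENNReal.ofReal_add hδ.le (by positivity)]
      exact ENNReal.lt_add_right ENNReal.ofReal_ne_top
        (ENNReal.ofReal_pos.mpr (by positivity)).ne'
    rw [transportCost, iInf_lt_iff] at hlt
    obtain ⟨γ, hlt⟩ := hlt
    rw [iInf_lt_iff] at hlt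
    obtain ⟨h1, hlt⟩ := hlt
    rw [iInf_lt_iff] at hlt
    obtain ⟨h2, hγ⟩ := hlt
    set ε' : ℝ := ε / (‖π‖ + 1) with hε'
    have hε'pos : 0 < ε' := by positivity
    haveI : IsProbabilityMeasure γ := by
      constructor
      have h := Measure.map_apply (μ := γ) measurable_fst MeasurableSet.univ
      rw [h1] at h
      simpa [measure_univ] using h.symm
    -- integrability facts
    have hcostcont : Continuous fun p : EuclideanSpace ℝ (Fin n) × EuclideanSpace ℝ (Fin n) =>
        ‖p.1 - p.2‖ := (continuous_fst.sub continuous_snd).norm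
    have hIlt : ∫⁻ p, ENNReal.ofReal ‖p.1 - p.2‖ ∂γ < ⊤ := lt_of_lt_of_le hγ le_top
    have hg2int : Integrable (fun p : EuclideanSpace ℝ (Fin n) × EuclideanSpace ℝ (Fin n) =>
        ‖p.1 - p.2‖) γ :=
      ⟨hcostcont.aestronglyMeasurable,
        (hasFiniteIntegral_iff_ofReal (Filter.Eventually.of_forall fun p => norm_nonneg _)).2 hIlt⟩
    have h2fin : ∫⁻ p, ENNReal.ofReal ‖p.2‖ ∂γ < ⊤ := by
      have hmap : ∫⁻ y, ENNReal.ofReal ‖y‖ ∂(γ.map Prod.snd)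
          = ∫⁻ p, ENNReal.ofReal ‖p.2‖ ∂γ :=
        lintegral_map (measurable_norm.ennreal_ofReal) measurable_snd
      rw [← hmap, h2, lintegral_empirical]
      exact ENNReal.mul_lt_top (by simp [hN]) (ENNReal.sum_lt_top.mpr fun i _ => ENNReal.ofReal_lt_top)
    have h1fin : ∫⁻ p, ENNReal.ofReal ‖p.1‖ ∂γ < ⊤ := by
      have hpt : ∀ p : EuclideanSpace ℝ (Fin n) × EuclideanSpace ℝ (Fin n),
          ENNReal.ofReal ‖p.1‖ ≤ ENNReal.ofReal ‖p.1 - p.2‖ + ENNReal.ofReal ‖p.2‖ := by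
        intro p
        rw [← ENNReal.ofReal_add (norm_nonneg _) (norm_nonneg _)]
        refine ENNReal.ofReal_le_ofReal ?_
        calc ‖p.1‖ = ‖(p.1 - p.2) + p.2‖ := by rw [sub_add_cancel]
        _ ≤ ‖p.1 - p.2‖ + ‖p.2‖ := norm_add_le _ _
      calc ∫⁻ p, ENNReal.ofReal ‖p.1‖ ∂γ
          ≤ ∫⁻ p, (ENNReal.ofReal ‖p.1 - p.2‖ + ENNReal.ofReal ‖p.2‖) ∂γ :=
            lintegral_mono hpt
        _ = ∫⁻ p, ENNReal.ofReal ‖p.1 - p.2‖ ∂γ + ∫⁻ p, ENNReal.ofReal ‖p.2‖ ∂γ :=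
            lintegral_add_left (hcostcont.measurable.ennreal_ofReal) _
        _ < ⊤ := ENNReal.add_lt_top.mpr ⟨hIlt, h2fin⟩
    have hn1int : Integrable (fun p : EuclideanSpace ℝ (Fin n) × EuclideanSpace ℝ (Fin n) =>
        ‖p.1‖) γ :=
      ⟨(continuous_fst.norm).aestronglyMeasurable,
        (hasFiniteIntegral_iff_ofReal (Filter.Eventually.of_forall fun p => norm_nonneg _)).2 h1fin⟩
    have hn2int : Integrable (fun p : EuclideanSpace ℝ (Fin n) × EuclideanSpace ℝ (Fin n) =>
        ‖p.2‖) γ :=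
      ⟨(continuous_snd.norm).aestronglyMeasurable,
        (hasFiniteIntegral_iff_ofReal (Filter.Eventually.of_forall fun p => norm_nonneg _)).2 h2fin⟩
    have hi1int : Integrable (fun p : EuclideanSpace ℝ (Fin n) × EuclideanSpace ℝ (Fin n) =>
        ⟪π, p.1⟫) γ := by
      refine (hn1int.const_mul ‖π‖).mono
        ((hinner_cont.comp continuous_fst).aestronglyMeasurable)
        (Filter.Eventually.of_forall fun p => ?_)
      simp only [Real.norm_eq_abs]
      calc |⟪π, p.1⟫| ≤ ‖π‖ * ‖p.1‖ := abs_real_inner_le_norm π p.1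
        _ = |‖π‖ * ‖p.1‖| := (abs_of_nonneg (by positivity)).symm
    have hi2int : Integrable (fun p : EuclideanSpace ℝ (Fin n) × EuclideanSpace ℝ (Fin n) =>
        ⟪π, p.2⟫) γ := by
      refine (hn2int.const_mul ‖π‖).mono
        ((hinner_cont.comp continuous_snd).aestronglyMeasurable)
        (Filter.Eventually.of_forall fun p => ?_)
      simp only [Real.norm_eq_abs]
      calc |⟪π, p.2⟫| ≤ ‖π‖ * ‖p.2‖ := abs_real_inner_le_norm π p.2
        _ = |‖π‖ * ‖p.2‖| := (abs_of_nonneg (by positivity)).symm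
    -- identify the two marginal integrals
    have e1 : ∫ p, ⟪π, p.1⟫ ∂γ = ∫ x, ⟪π, x⟫ ∂P := by
      rw [← h1]
      exact (integral_map measurable_fst.aemeasurable
        (hinner_cont.aestronglyMeasurable)).symm
    have e2 : ∫ p, ⟪π, p.2⟫ ∂γ = m := by
      have := integral_map (μ := γ) measurable_snd.aemeasurable
        (f := fun x => ⟪π, x⟫) (hinner_cont.aestronglyMeasurable)
      rw [h2] at this
      rw [← this, integral_empirical R _ hinner_cont]
    -- the transport bound
    have hcost_le : ∫ p, ‖p.1 - p.2‖ ∂γ ≤ δ + ε' := by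
      rw [integral_eq_lintegral_of_nonneg_ae
        (Filter.Eventually.of_forall fun p => norm_nonneg _) hcostcont.aestronglyMeasurable]
      exact ENNReal.toReal_le_of_le_ofReal (by positivity) hγ.le
    have key : m - ∫ x, ⟪π, x⟫ ∂P ≤ ‖π‖ * (δ + ε') := by
      rw [← e1, ← e2, ← integral_sub hi2int hi1int]
      calc ∫ p, (⟪π, p.2⟫ - ⟪π, p.1⟫) ∂γ
          ≤ ∫ p, ‖π‖ * ‖p.1 - p.2‖ ∂γ := by
            refine integral_mono (hi2int.sub hi1int) (hg2int.const_mul ‖π‖) fun p => ?_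
            rw [← inner_sub_right]
            calc ⟪π, p.2 - p.1⟫ ≤ |⟪π, p.2 - p.1⟫| := le_abs_self _
              _ ≤ ‖π‖ * ‖p.2 - p.1‖ := abs_real_inner_le_norm _ _
              _ = ‖π‖ * ‖p.1 - p.2‖ := by rw [norm_sub_rev]
        _ = ‖π‖ * ∫ p, ‖p.1 - p.2‖ ∂γ := by rw [integral_const_mul]
        _ ≤ ‖π‖ * (δ + ε') :=
            mul_le_mul_of_nonneg_left hcost_le (norm_nonneg _)
    have hε'mul : ‖π‖ * ε' ≤ ε := by
      rw [hε']
      rw [mul_div_assoc'] at *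
      rw [div_le_iff₀ (by positivity)]
      nlinarith [norm_nonneg π]
    nlinarith [key, hε'mul]
  -- Upper bound : the shifted empirical measure
  set v : EuclideanSpace ℝ (Fin n) := -((δ / ‖π‖) • π) with hv
  have hvnorm : ‖v‖ ≤ δ := by
    rw [hv, norm_neg, norm_smul]
    by_cases hπ : π = 0
    · simp [hπ, hδ.le]
    · have : ‖π‖ ≠ 0 := norm_ne_zero_iff.mpr hπ
      rw [Real.norm_eq_abs, abs_of_nonneg (by positivity), div_mul_cancel₀ _ this]
  have hinnerv : ⟪π, v⟫ = -(δ * ‖π‖) := by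
    rw [hv, inner_neg_right, real_inner_smul_right, real_inner_self_eq_norm_mul_norm]
    by_cases hπ : π = 0
    · simp [hπ]
    · have : ‖π‖ ≠ 0 := norm_ne_zero_iff.mpr hπ
      field_simp
  set P₀ : Measure (EuclideanSpace ℝ (Fin n)) := (empirical R).map (fun x => x + v) with hP₀
  have hmeas_add : Measurable fun x : EuclideanSpace ℝ (Fin n) => x + v :=
    measurable_id.add_const v
  haveI hP₀prob : IsProbabilityMeasure P₀ :=
    Measure.isProbabilityMeasure_map hmeas_add.aemeasurable
  have hT : Measurable fun x : EuclideanSpace ℝ (Fin n) => (x + v, x) :=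
    hmeas_add.prodMk measurable_id
  set γ₀ : Measure (EuclideanSpace ℝ (Fin n) × EuclideanSpace ℝ (Fin n)) :=
    (empirical R).map (fun x => (x + v, x)) with hγ₀
  have hγ₀1 : γ₀.map Prod.fst = P₀ := by
    rw [hγ₀, Measure.map_map measurable_fst hT]
    rfl
  have hγ₀2 : γ₀.map Prod.snd = empirical R := by
    rw [hγ₀, Measure.map_map measurable_snd hT]
    exact Measure.map_id
  have hcost₀ : transportCost (fun u w => ENNReal.ofReal ‖u - w‖) P₀ (empirical R)
      ≤ ENNReal.ofReal δ := by
    refine iInf_le_of_le γ₀ (iInf_le_of_le hγ₀1 (iInf_le_of_le hγ₀2 ?_))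
    rw [hγ₀, lintegral_map (f := fun p : EuclideanSpace ℝ (Fin n) × EuclideanSpace ℝ (Fin n) =>
          ENNReal.ofReal ‖p.1 - p.2‖)
      ((continuous_fst.sub continuous_snd).norm.measurable.ennreal_ofReal) hT]
    simp only [add_sub_cancel_left]
    rw [lintegral_const]
    simp [measure_univ]
    rw [← ofReal_norm_eq_enorm]; exact ENNReal.ofReal_le_ofReal hvnorm
  have hval₀ : ∫ x, ⟪π, x⟫ ∂P₀ = m - δ * ‖π‖ := by
    rw [hP₀, integral_map hmeas_add.aemeasurable hinner_cont.aestronglyMeasurable,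
      integral_empirical R (fun x => ⟪π, x + v⟫) (by fun_prop)]
    simp only [inner_add_right, hinnerv, Finset.sum_add_distrib, Finset.sum_const,
      Finset.card_univ, Fintype.card_fin, nsmul_eq_mul, mul_add, hm]
    have hNne : (N : ℝ) ≠ 0 := Nat.cast_ne_zero.mpr hN.ne'
    field_simp
    ring
  -- conclude
  apply le_antisymm
  · refine iInf_le_of_le P₀ (iInf_le_of_le hP₀prob (iInf_le_of_le hcost₀ ?_))
    exact_mod_cast hval₀.le
  · refine le_iInf fun P => le_iInf fun hP => le_iInf fun hc => ?_
    exact_mod_cast lower P hP hc
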